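/- Let f: 2^U → ℝ≥0 be submodular and nonnegative, and for a positive integer k let O_k denote a set maximizing f among subsets of U of size at most k. Then for positive integers k_1 ≤ k_2, f(O_{k_1}) ≥ (k_1/k_2)·f(O_{k_2}). -/

import Mathlib

private lemma submod_lemA {U : Type*} [DecidableEq U] (f : Finset U → ℝ)
    (hsub : ∀ X Y : Finset U, f (X ∪ Y) + f (X ∩ Y) ≤ f X + f Y) :
    ∀ S : Finset U, ∑ a ∈ S, (f S - f (S.erase a)) ≤ f S - f ∅ := by
  intro S
  induction S using Finset.induction_on with
  | empty => simp
  | insert _ _ ha ih =>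
    rename_i a S
    rw [Finset.sum_insert ha]
    have key : ∀ x ∈ S, f (insert a S) - f ((insert a S).erase x) ≤ f S - f (S.erase x) := by
      intro x hx
      have hxa : x ≠ a := fun h => ha (h ▸ hx)
      have h1 : (insert a S).erase x = insert a (S.erase x) := by
        rw [Finset.erase_insert_of_ne hxa.symm]
      have h2 := hsub (insert a (S.erase x)) S
      have hu : insert a (S.erase x) ∪ S = insert a S := by
        ext y; simp [Finset.mem_erase]; tauto
      have hi : insert a (S.erase x) ∩ S = S.erase x := by
        ext y
        simp only [Finset.mem_inter, Finset.mem_insert, Finset.mem_erase]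
        constructor
        · rintro ⟨(rfl | ⟨h1, h2⟩), hy⟩
          · exact absurd hy ha
          · exact ⟨h1, hy⟩
        · rintro ⟨h1, h2⟩; exact ⟨Or.inr ⟨h1, h2⟩, h2⟩
      rw [hu, hi] at h2
      rw [h1]; linarith
    have hsum : ∑ x ∈ S, (f (insert a S) - f ((insert a S).erase x)) ≤
        ∑ x ∈ S, (f S - f (S.erase x)) := Finset.sum_le_sum key
    have herase : (insert a S).erase a = S := Finset.erase_insert ha
    rw [herase]
    linarith

private lemma submod_lemB {U : Type*} [DecidableEq U] (f : Finset U → ℝ)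
    (hnn : ∀ S : Finset U, 0 ≤ f S)
    (lemA : ∀ S : Finset U, ∑ a ∈ S, (f S - f (S.erase a)) ≤ f S - f ∅)
    (T : Finset U) (j : ℕ) :
    (j : ℝ) * ∑ S ∈ T.powersetCard (j+1), f S ≤
      ((T.card - j : ℕ) : ℝ) * ∑ R ∈ T.powersetCard j, f R := by
  have step1 : ∀ S ∈ T.powersetCard (j+1), (j:ℝ) * f S ≤ ∑ a ∈ S, f (S.erase a) := by
    intro S hS
    have hcard : S.card = j + 1 := (Finset.mem_powersetCard.mp hS).2
    have h1 := lemA S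
    have h2 : ∑ a ∈ S, (f S - f (S.erase a)) =
        (S.card : ℝ) * f S - ∑ a ∈ S, f (S.erase a) := by
      rw [Finset.sum_sub_distrib, Finset.sum_const, nsmul_eq_mul]
    rw [h2, hcard] at h1
    have := hnn ∅
    push_cast at h1 ⊢
    linarith
  have main : ∑ S ∈ T.powersetCard (j+1), ∑ a ∈ S, f (S.erase a) =
      ∑ R ∈ T.powersetCard j, ∑ _a ∈ T \ R, f R := by
    rw [← Finset.sum_sigma (T.powersetCard (j+1)) (fun S => S)
        (fun p => f (p.1.erase p.2)),
      ← Finset.sum_sigma (T.powersetCard j) (fun R => T \ R) (fun p => f p.1)]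
    refine Finset.sum_nbij' (fun p => ⟨p.1.erase p.2, p.2⟩)
      (fun p => ⟨insert p.2 p.1, p.2⟩) ?_ ?_ ?_ ?_ ?_
    · rintro ⟨S, a⟩ hp
      simp only [Finset.mem_sigma, Finset.mem_powersetCard] at hp ⊢
      obtain ⟨⟨hSsub, hScard⟩, haS⟩ := hp
      refine ⟨⟨(Finset.erase_subset _ _).trans hSsub, ?_⟩, ?_⟩
      · rw [Finset.card_erase_of_mem haS, hScard]; rfl
      · simp [Finset.mem_sdiff, hSsub haS]
    · rintro ⟨R, a⟩ hp
      simp only [Finset.mem_sigma, Finset.mem_powersetCard, Finset.mem_sdiff] at hp ⊢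
      obtain ⟨⟨hRsub, hRcard⟩, haT, haR⟩ := hp
      refine ⟨⟨Finset.insert_subset haT hRsub, ?_⟩, Finset.mem_insert_self _ _⟩
      rw [Finset.card_insert_of_notMem haR, hRcard]
    · rintro ⟨S, a⟩ hp
      simp only [Finset.mem_sigma] at hp
      simp [Finset.insert_erase hp.2]
    · rintro ⟨R, a⟩ hp
      simp only [Finset.mem_sigma, Finset.mem_sdiff] at hp
      simp [Finset.erase_insert hp.2.2]
    · rintro ⟨S, a⟩ _; rfl
  have count : ∀ R ∈ T.powersetCard j, ∑ _a ∈ T \ R, f R = ((T.card - j : ℕ) : ℝ) * f R := by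
    intro R hR
    obtain ⟨hRsub, hRcard⟩ := Finset.mem_powersetCard.mp hR
    rw [Finset.sum_const, Finset.card_sdiff_of_subset hRsub, hRcard, nsmul_eq_mul]
  calc (j : ℝ) * ∑ S ∈ T.powersetCard (j+1), f S
      = ∑ S ∈ T.powersetCard (j+1), (j:ℝ) * f S := by rw [Finset.mul_sum]
    _ ≤ ∑ S ∈ T.powersetCard (j+1), ∑ a ∈ S, f (S.erase a) := Finset.sum_le_sum step1
    _ = ∑ R ∈ T.powersetCard j, ∑ _a ∈ T \ R, f R := main
    _ = ∑ R ∈ T.powersetCard j, ((T.card - j : ℕ) : ℝ) * f R := Finset.sum_congr rfl count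
    _ = ((T.card - j : ℕ) : ℝ) * ∑ R ∈ T.powersetCard j, f R := by rw [← Finset.mul_sum]

private lemma submod_lemC {U : Type*} [DecidableEq U] (f : Finset U → ℝ)
    (hnn : ∀ S : Finset U, 0 ≤ f S)
    (lemA : ∀ S : Finset U, ∑ a ∈ S, (f S - f (S.erase a)) ≤ f S - f ∅)
    (T : Finset U) :
    ∀ d : ℕ, d ≤ T.card →
      ((T.card - d : ℕ) : ℝ) * ((T.card.choose (T.card - d) : ℕ) : ℝ) * f T ≤
        (T.card : ℝ) * ∑ S ∈ T.powersetCard (T.card - d), f S := by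
  intro d
  induction d with
  | zero =>
    intro _
    simp [Finset.powersetCard_self]
  | succ d ih =>
    intro hd1
    have hd : d ≤ T.card := Nat.le_of_succ_le hd1
    have ihh := ih hd
    set n := T.card with hn
    set j := n - (d+1) with hjdef
    have hj1 : j + 1 = n - d := by omega
    have hnj : n - j = d + 1 := by omega
    have hB := submod_lemB f hnn lemA T j
    rw [hnj] at hB
    rw [← hj1] at ihh
    -- identity: (j+1) * choose n (j+1) = (n - j) * choose n j = (d+1) * choose n j
    have hid : (n.choose (j+1)) * (j+1) = n.choose j * (n - j) := Nat.choose_succ_right_eq n j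
    rw [hnj] at hid
    have hidR : ((j:ℝ)+1) * (n.choose (j+1) : ℝ) = ((d:ℝ)+1) * (n.choose j : ℝ) := by
      have := congrArg (Nat.cast : ℕ → ℝ) hid
      push_cast at this
      linarith
    -- multiply ihh by j ≥ 0
    have h3 : (j:ℝ) * (((j:ℝ)+1) * (n.choose (j+1) : ℝ) * f T) ≤
        (j:ℝ) * ((n:ℝ) * ∑ S ∈ T.powersetCard (j+1), f S) := by
      apply mul_le_mul_of_nonneg_left _ (by positivity)
      have : ((j+1 : ℕ):ℝ) = (j:ℝ)+1 := by push_cast; ring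
      calc ((j:ℝ)+1) * (n.choose (j+1) : ℝ) * f T
          = ((j+1 : ℕ):ℝ) * ((n.choose (j+1) : ℕ):ℝ) * f T := by rw [this]
        _ ≤ (n:ℝ) * ∑ S ∈ T.powersetCard (j+1), f S := ihh
    have h4 : (n:ℝ) * ((j:ℝ) * ∑ S ∈ T.powersetCard (j+1), f S) ≤
        (n:ℝ) * (((d:ℕ)+1:ℝ) * ∑ R ∈ T.powersetCard j, f R) := by
      apply mul_le_mul_of_nonneg_left _ (by positivity)
      have : ((d+1 : ℕ):ℝ) = (d:ℝ)+1 := by push_cast; ring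
      calc (j:ℝ) * ∑ S ∈ T.powersetCard (j+1), f S
          ≤ ((d+1 : ℕ):ℝ) * ∑ R ∈ T.powersetCard j, f R := hB
        _ = ((d:ℝ)+1) * ∑ R ∈ T.powersetCard j, f R := by rw [this]
    -- combine: j*(d+1)*choose n j * f T ≤ n*(d+1)*Σ_j, cancel (d+1) > 0
    have heq : (j:ℝ) * (((j:ℝ)+1) * (n.choose (j+1) : ℝ) * f T) =
        ((d:ℝ)+1) * ((j:ℝ) * (n.choose j : ℝ) * f T) := by
      linear_combination (j:ℝ) * f T * hidR
    have h5 : ((d:ℝ)+1) * ((j:ℝ) * (n.choose j : ℝ) * f T) ≤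
        ((d:ℝ)+1) * ((n:ℝ) * ∑ R ∈ T.powersetCard j, f R) := by
      linarith [h3, h4, heq]
    have h6 : (j:ℝ) * (n.choose j : ℝ) * f T ≤ (n:ℝ) * ∑ R ∈ T.powersetCard j, f R :=
      le_of_mul_le_mul_left h5 (by positivity)
    exact h6

theorem stmt_4 {U : Type*} [DecidableEq U] [Fintype U]
    (f : Finset U → ℝ)
    (hsub : ∀ X Y : Finset U, f (X ∪ Y) + f (X ∩ Y) ≤ f X + f Y)
    (hnn : ∀ S : Finset U, 0 ≤ f S)
    (k₁ k₂ : ℕ) (hk₁ : 0 < k₁) (hk : k₁ ≤ k₂)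
    (O₁ O₂ : Finset U)
    (hO₁c : O₁.card ≤ k₁) (hO₁ : ∀ S : Finset U, S.card ≤ k₁ → f S ≤ f O₁)
    (hO₂c : O₂.card ≤ k₂) (hO₂ : ∀ S : Finset U, S.card ≤ k₂ → f S ≤ f O₂) :
    ((k₁ : ℝ) / (k₂ : ℝ)) * f O₂ ≤ f O₁ := by
  have hk₂ : (0:ℝ) < k₂ := by exact_mod_cast Nat.lt_of_lt_of_le hk₁ hk
  have lemA := submod_lemA f hsub
  set n := O₂.card with hn
  -- main claim: k₁ * f O₂ ≤ k₂ * f O₁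
  have key : (k₁ : ℝ) * f O₂ ≤ (k₂ : ℝ) * f O₁ := by
    by_cases hcase : n ≤ k₁
    · have h1 : f O₂ ≤ f O₁ := hO₁ O₂ hcase
      have h2 : (k₁:ℝ) ≤ (k₂:ℝ) := by exact_mod_cast hk
      nlinarith [hnn O₂, hnn O₁]
    · push_neg at hcase
      have hkn : k₁ ≤ n := le_of_lt hcase
      have hC := submod_lemC f hnn lemA O₂ (n - k₁) (Nat.sub_le _ _)
      have hnk : n - (n - k₁) = k₁ := by omega
      rw [hnk] at hC
      have hbound : ∑ S ∈ O₂.powersetCard k₁, f S ≤ ((n.choose k₁ : ℕ):ℝ) * f O₁ := by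
        have := Finset.sum_le_card_nsmul (O₂.powersetCard k₁) f (f O₁)
          (fun S hS => hO₁ S (le_of_eq (Finset.mem_powersetCard.mp hS).2))
        rwa [Finset.card_powersetCard, nsmul_eq_mul] at this
      have hchoosepos : 0 < n.choose k₁ := Nat.choose_pos hkn
      have hcposR : (0:ℝ) < ((n.choose k₁ : ℕ):ℝ) := by exact_mod_cast hchoosepos
      have h7 : (k₁:ℝ) * ((n.choose k₁ : ℕ):ℝ) * f O₂ ≤
          (n:ℝ) * (((n.choose k₁ : ℕ):ℝ) * f O₁) :=
        le_trans hC (mul_le_mul_of_nonneg_left hbound (by positivity))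
      have h8 : ((n.choose k₁ : ℕ):ℝ) * ((k₁:ℝ) * f O₂) ≤
          ((n.choose k₁ : ℕ):ℝ) * ((n:ℝ) * f O₁) := by ring_nf; ring_nf at h7; linarith
      have h9 : (k₁:ℝ) * f O₂ ≤ (n:ℝ) * f O₁ := le_of_mul_le_mul_left h8 hcposR
      have h10 : (n:ℝ) * f O₁ ≤ (k₂:ℝ) * f O₁ := by
        apply mul_le_mul_of_nonneg_right _ (hnn O₁)
        exact_mod_cast hO₂c
      linarith
  rw [div_mul_eq_mul_div, div_le_iff₀ hk₂]
  linarith
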